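/- Let u(x) = x²/2 on [0,1], and for n ∈ ℕ with h = 1/n let u_h(x) = u(x) + cos(πnx)/(nπ)². Then: u_h(x) ≥ 0 and u_h → u uniformly on [0,1]; u_h'(x) = u'(x) − sin(πnx)/(nπ) satisfies 0 ≤ u_h'(x) ≤ 1 and u_h' → u' uniformly on [0,1]; the centered second difference satisfies Δ²_h u_h(x) := (u_h(x+h) − 2u_h(x) + u_h(x−h))/h² = 1 − 4cos(πnx)/π², which is nonnegative for all x; yet for m > 0, n = 2^{j+m} and the dyadic point x = i/2^j one has Δ²_h u_h(x) = 1 − 4/π², while u''(x) = 1. Hence the second order differences of u_h at dyadic points converge to 1 − 4/π² ≠ 1 = u'', even though u_h and u_h' converge uniformly to u and u'. -/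

import Mathlib

open Set Filter Real

namespace Stmt19

/-- `u(x) = x²/2`. -/
noncomputable def u (x : ℝ) : ℝ := x ^ 2 / 2

/-- `u_h(x) = x²/2 + cos(πnx)/(nπ)²` for `h = 1/n`. -/
noncomputable def uh (n : ℕ) (x : ℝ) : ℝ :=
  x ^ 2 / 2 + Real.cos (π * n * x) / (n * π) ^ 2

/-- Centered second difference `secondDiff_h v (x) = (v(x+h) - 2v(x) + v(x-h))/h²`. -/
noncomputable def secondDiff (v : ℝ → ℝ) (h x : ℝ) : ℝ :=
  (v (x + h) - 2 * v x + v (x - h)) / h ^ 2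

end Stmt19

open Stmt19

lemma aux_unif {F : ℕ → ℝ → ℝ} {f : ℝ → ℝ} {s : Set ℝ}
    (h : ∀ n : ℕ, 1 ≤ n → ∀ x ∈ s, |F n x - f x| ≤ 1 / n) :
    TendstoUniformlyOn F f atTop s := by
  rw [Metric.tendstoUniformlyOn_iff]
  intro ε hε
  obtain ⟨N, hN⟩ := exists_nat_gt (1 / ε)
  filter_upwards [eventually_ge_atTop (max N 1)] with n hn x hx
  rw [dist_comm, Real.dist_eq]
  have h1 : 1 ≤ n := le_trans (le_max_right _ _) hn
  have hn0 : (0:ℝ) < n := by exact_mod_cast h1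
  have hNn : (1:ℝ) / ε < n := lt_of_lt_of_le hN
    (by exact_mod_cast le_trans (le_max_left _ _) hn)
  calc |F n x - f x| ≤ 1 / n := h n h1 x hx
    _ < ε := by
        rw [div_lt_iff₀ hn0]
        have := (div_lt_iff₀ hε).mp hNn
        linarith

lemma uh_hasDerivAt (n : ℕ) (hn : 0 < n) (x : ℝ) :
    HasDerivAt (uh n) (x - Real.sin (π * n * x) / (n * π)) x := by
  have hn0 : (n:ℝ) ≠ 0 := Nat.cast_ne_zero.mpr hn.ne'
  have h1 : HasDerivAt (fun x : ℝ => x ^ 2 / 2) x x := by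
    have := (hasDerivAt_pow 2 x).div_const 2
    simpa using this
  have h2 : HasDerivAt (fun x : ℝ => π * n * x) (π * n) x := by
    simpa using (hasDerivAt_id x).const_mul (π * n)
  have h3 : HasDerivAt (fun x : ℝ => Real.cos (π * n * x))
      (-Real.sin (π * n * x) * (π * n)) x :=
    (Real.hasDerivAt_cos (π * n * x)).comp x h2
  have h4 := h1.add (h3.div_const ((n * π) ^ 2))
  convert h4 using 1 <;> try rfl
  field_simp [Real.pi_ne_zero]
  ring

lemma deriv_u_eq : deriv u = fun x : ℝ => x := by
  funext x
  have h1 : HasDerivAt u x x := by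
    have := (hasDerivAt_pow 2 x).div_const 2
    simp at this; exact this
  exact h1.deriv

/-- For `u(x) = x²/2` and `u_h(x) = u(x) + cos(πnx)/(nπ)²` (`h = 1/n`):
`u_h ≥ 0` on `[0,1]` and `u_h → u` uniformly on `[0,1]`; the derivative
`u_h'(x) = x - sin(πnx)/(nπ)` lies in `[0,1]` on `[0,1]` and converges uniformly to
`u'`; the centered second difference with step `h = 1/n` equals `1 - 4cos(πnx)/π²`,
which is nonnegative; yet at a dyadic point `x = i/2^j` with `n = 2^(j+m)`, `m > 0`,
it equals `1 - 4/π²`, whereas `u''(x) = 1` and `1 - 4/π² ≠ 1`. -/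
theorem stmt_19 :
    (∀ n : ℕ, 0 < n → ∀ x ∈ Icc (0 : ℝ) 1, 0 ≤ uh n x) ∧
    TendstoUniformlyOn (fun n : ℕ => uh n) u atTop (Icc (0 : ℝ) 1) ∧
    (∀ n : ℕ, 0 < n → ∀ x : ℝ,
      deriv (uh n) x = x - Real.sin (π * n * x) / (n * π)) ∧
    (∀ n : ℕ, 0 < n → ∀ x ∈ Icc (0 : ℝ) 1,
      0 ≤ deriv (uh n) x ∧ deriv (uh n) x ≤ 1) ∧
    TendstoUniformlyOn (fun n : ℕ => deriv (uh n)) (deriv u) atTop (Icc (0 : ℝ) 1) ∧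
    (∀ n : ℕ, 0 < n → ∀ x : ℝ,
      secondDiff (uh n) (1 / n) x = 1 - 4 * Real.cos (π * n * x) / π ^ 2) ∧
    (∀ n : ℕ, 0 < n → ∀ x : ℝ, 0 ≤ 1 - 4 * Real.cos (π * n * x) / π ^ 2) ∧
    (∀ m j i : ℕ, 0 < m → i ≤ 2 ^ j →
      secondDiff (uh (2 ^ (j + m))) (1 / (2 : ℝ) ^ (j + m)) ((i : ℝ) / 2 ^ j)
        = 1 - 4 / π ^ 2) ∧
    (∀ x : ℝ, deriv (deriv u) x = 1) ∧
    (1 - 4 / π ^ 2 ≠ 1) := by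
  have hπ := Real.pi_gt_three
  have hπ0 : (0:ℝ) < π := by linarith
  -- derivative formula
  have hderiv : ∀ n : ℕ, 0 < n → ∀ x : ℝ,
      deriv (uh n) x = x - Real.sin (π * n * x) / (n * π) :=
    fun n hn x => (uh_hasDerivAt n hn x).deriv
  -- second difference formula
  have hsd : ∀ n : ℕ, 0 < n → ∀ x : ℝ,
      secondDiff (uh n) (1 / n) x = 1 - 4 * Real.cos (π * n * x) / π ^ 2 := by
    intro n hn x
    have hn0 : (n:ℝ) ≠ 0 := Nat.cast_ne_zero.mpr hn.ne'
    have e1 : π * n * (x + 1 / n) = π * n * x + π := by field_simp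
    have e2 : π * n * (x - 1 / n) = π * n * x - π := by field_simp
    simp only [secondDiff, uh, e1, e2, Real.cos_add_pi, Real.cos_sub_pi]
    field_simp
    ring
  refine ⟨?_, ?_, hderiv, ?_, ?_, hsd, ?_, ?_, ?_, ?_⟩
  · -- nonnegativity of uh
    intro n hn x hx
    have hn1 : (1:ℝ) ≤ n := by exact_mod_cast hn
    have hcos := Real.one_sub_sq_div_two_le_cos (x := π * n * x)
    have hsq : (0:ℝ) < (n * π) ^ 2 := by positivity
    have h2 : ((1:ℝ) - (π * n * x) ^ 2 / 2) / (n * π) ^ 2 ≤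
        Real.cos (π * n * x) / (n * π) ^ 2 := by gcongr
    have key : ((1:ℝ) - (π * n * x) ^ 2 / 2) / (n * π) ^ 2
        = 1 / (n * π) ^ 2 - x ^ 2 / 2 := by
      field_simp
    rw [key] at h2
    have hpos : (0:ℝ) < 1 / (n * π) ^ 2 := by positivity
    unfold uh
    linarith
  · -- uniform convergence of uh to u
    apply aux_unif
    intro n h1 x _
    have hn1 : (1:ℝ) ≤ n := by exact_mod_cast h1
    have hn0 : (0:ℝ) < n := by linarith
    have heq : uh n x - u x = Real.cos (π * n * x) / (n * π) ^ 2 := by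
      simp [uh, u]
    rw [heq, abs_div, abs_of_pos (by positivity : (0:ℝ) < (n*π)^2)]
    have hc : |Real.cos (π * n * x)| ≤ 1 := Real.abs_cos_le_one _
    rw [div_le_div_iff₀ (by positivity) hn0]
    have hb : (n:ℝ) ≤ ((n:ℝ) * π) ^ 2 := by
      have e : ((n:ℝ) * π) ^ 2 = (n:ℝ)^2 * π^2 := by ring
      have ha : (n:ℝ) ≤ (n:ℝ)^2 := by nlinarith
      have hb2 : (9:ℝ) ≤ π^2 := by nlinarith
      nlinarith [mul_le_mul_of_nonneg_left hb2 (sq_nonneg (n:ℝ))]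
    calc |Real.cos (π * n * x)| * n ≤ 1 * n :=
          mul_le_mul_of_nonneg_right hc hn0.le
      _ ≤ 1 * ((n:ℝ) * π) ^ 2 := by linarith
  · -- derivative bounds
    intro n hn x hx
    have hn0 : (0:ℝ) < n := by exact_mod_cast hn
    rw [hderiv n hn x]
    obtain ⟨hx0, hx1⟩ := hx
    constructor
    · have hsle : Real.sin (π * n * x) ≤ π * n * x :=
        Real.sin_le (by positivity)
      have : Real.sin (π * n * x) / (n * π) ≤ x := by
        rw [div_le_iff₀ (by positivity)]
        calc Real.sin (π * n * x) ≤ π * n * x := hsle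
          _ = x * (n * π) := by ring
      linarith
    · have habs : |Real.sin (π * n * x)| ≤ π * n * (1 - x) := by
        have he : Real.sin (π * n * x)
            = (-1:ℝ) ^ n * Real.sin (π * n * (x - 1)) := by
          have harg : π * n * x = π * n * (x - 1) + n * π := by ring
          rw [harg, Real.sin_add_nat_mul_pi]
        rw [he, abs_mul, abs_pow, abs_neg, abs_one, one_pow, one_mul]
        calc |Real.sin (π * n * (x - 1))| ≤ |π * n * (x - 1)| :=
              Real.abs_sin_le_abs
          _ = π * n * (1 - x) := by
              rw [abs_of_nonpos (mul_nonpos_of_nonneg_of_nonpos (mul_nonneg hπ0.le hn0.le) (by linarith))]; ring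
      have hlow : (x - 1) ≤ Real.sin (π * n * x) / (n * π) := by
        rw [le_div_iff₀ (by positivity)]
        nlinarith [neg_abs_le (Real.sin (π * n * x)), habs]
      linarith
  · -- uniform convergence of derivatives
    apply aux_unif
    intro n h1 x _
    have hn1 : (1:ℝ) ≤ n := by exact_mod_cast h1
    have hn0 : (0:ℝ) < n := by linarith
    rw [hderiv n h1 x, deriv_u_eq]
    have : x - Real.sin (π * n * x) / (n * π) - x = -(Real.sin (π * n * x) / (n * π)) := by ring
    rw [this, abs_neg, abs_div, abs_of_pos (by positivity : (0:ℝ) < n * π)]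
    have hc : |Real.sin (π * n * x)| ≤ 1 := Real.abs_sin_le_one _
    rw [div_le_div_iff₀ (by positivity) hn0]
    nlinarith [abs_nonneg (Real.sin (π * n * x))]
  · -- nonnegativity of 1 - 4cos/π²
    intro n hn x
    have hc : Real.cos (π * n * x) ≤ 1 := Real.cos_le_one _
    rw [sub_nonneg, div_le_one (by positivity)]
    nlinarith
  · -- dyadic point
    intro m j i hm hi
    have key := hsd (2 ^ (j + m)) (pow_pos two_pos _) ((i : ℝ) / 2 ^ j)
    have hcast : ((2 ^ (j + m) : ℕ) : ℝ) = (2 : ℝ) ^ (j + m) := by push_cast; ring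
    rw [hcast] at key
    rw [key]
    obtain ⟨m', rfl⟩ : ∃ m', m = m' + 1 := ⟨m - 1, (Nat.succ_pred_eq_of_pos hm).symm⟩
    have harg : π * (2:ℝ) ^ (j + (m' + 1)) * ((i:ℝ) / 2 ^ j)
        = ((i * 2 ^ m' : ℕ) : ℝ) * (2 * π) := by
      push_cast
      rw [pow_add, pow_succ]
      have h2j : ((2:ℝ) ^ j) ≠ 0 := by positivity
      field_simp
    rw [harg, Real.cos_nat_mul_two_pi]
    ring
  · -- second derivative of u
    intro x
    rw [deriv_u_eq]
    simp
  · -- 1 - 4/π² ≠ 1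
    intro h
    have : (4:ℝ) / π ^ 2 = 0 := by linarith
    have h4 : (4:ℝ) / π ^ 2 > 0 := by positivity
    linarith
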